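/- Let A be a finite-dimensional Frobenius algebra over a field K with Frobenius comultiplication δ and counit ε, and let M be a right A-comodule with structure map ∇ : M → M ⊗ A. Define m_∇ : M ⊗ A → M as the composition (id_M ⊗ ε) ∘ (id_M ⊗ μ) ∘ (∇ ⊗ id_A), where μ : A ⊗ A → A is multiplication. Then m_∇ endows M with the structure of a right A-module: m_∇ ∘ (m_∇ ⊗ id_A) = m_∇ ∘ (id_M ⊗ μ) and m_∇(x ⊗ 1_A) = x for all x ∈ M. -/
import Mathlib


open TensorProduct

/-- The module structure map `m_∇ = (id_M ⊗ ε) ∘ (id_M ⊗ μ) ∘ (∇ ⊗ id_A)`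
induced on a right `A`-comodule `(M, ∇)` by the counit `ε` of the Frobenius
comultiplication, with `μ : A ⊗ A → A` the multiplication. -/
noncomputable def modOf {K : Type*} [Field K] {A : Type*} [Ring A] [Algebra K A]
    {M : Type*} [AddCommGroup M] [Module K M]
    (ε : A →ₗ[K] K) (co : M →ₗ[K] M ⊗[K] A) : M ⊗[K] A →ₗ[K] M :=
  (TensorProduct.rid K M).toLinearMap ∘ₗ
    (TensorProduct.map (LinearMap.id : M →ₗ[K] M) ε) ∘ₗ
      (TensorProduct.map (LinearMap.id : M →ₗ[K] M) (LinearMap.mul' K A)) ∘ₗ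
        (TensorProduct.assoc K M A A).toLinearMap ∘ₗ
          (TensorProduct.map co (LinearMap.id : A →ₗ[K] A))

section Aux
variable {K : Type*} [Field K] {A : Type*} [Ring A] [Algebra K A]
  {M : Type*} [AddCommGroup M] [Module K M]

/-- `c ↦ ε (c * r)`. -/
noncomputable def gmap (ε : A →ₗ[K] K) (r : A) : A →ₗ[K] K :=
  ε ∘ₗ LinearMap.mulRight K r

@[simp] lemma gmap_apply (ε : A →ₗ[K] K) (r c : A) : gmap ε r c = ε (c * r) := rfl

lemma modOf_tmul (ε : A →ₗ[K] K) (co : M →ₗ[K] M ⊗[K] A) (x : M) (a : A) :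
    modOf ε co (x ⊗ₜ[K] a) = TensorProduct.rid K M
      (TensorProduct.map LinearMap.id (gmap ε a) (co x)) := by
  unfold modOf
  simp only [LinearMap.coe_comp, Function.comp_apply, LinearEquiv.coe_coe,
    TensorProduct.map_tmul, LinearMap.id_coe, id_eq]
  generalize co x = t
  induction t using TensorProduct.induction_on with
  | zero => simp
  | tmul y c => simp
  | add u v hu hv => simp only [add_tmul, map_add, hu, hv]

/-- the pairing `u ⊗ v ↦ ε(u*b) * ε(v*a)`. -/
noncomputable def pmap (ε : A →ₗ[K] K) (b a : A) : A ⊗[K] A →ₗ[K] K :=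
  LinearMap.mul' K K ∘ₗ TensorProduct.map (gmap ε b) (gmap ε a)

@[simp] lemma pmap_tmul (ε : A →ₗ[K] K) (b a u v : A) :
    pmap ε b a (u ⊗ₜ[K] v) = ε (u * b) * ε (v * a) := rfl

end Aux

/-- For a right `A`-comodule `(M, ∇)` over a Frobenius algebra `A`,
the map `m_∇` endows `M` with the structure of a right `A`-module:
`m_∇ ∘ (m_∇ ⊗ id_A) = m_∇ ∘ (id_M ⊗ μ)` and `m_∇(x ⊗ 1_A) = x`. -/
theorem comodule_to_module
    {K : Type*} [Field K] {A : Type*} [Ring A] [Algebra K A] [FiniteDimensional K A]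
    (δ : A →ₗ[K] A ⊗[K] A) (ε : A →ₗ[K] K)
    (hcoassoc : ∀ a : A,
      (TensorProduct.assoc K A A A)
          ((TensorProduct.map δ (LinearMap.id : A →ₗ[K] A)) (δ a)) =
        (TensorProduct.map (LinearMap.id : A →ₗ[K] A) δ) (δ a))
    (hcounit_l : ∀ a : A,
      (TensorProduct.lid K A)
          ((TensorProduct.map ε (LinearMap.id : A →ₗ[K] A)) (δ a)) = a)
    (hcounit_r : ∀ a : A,
      (TensorProduct.rid K A)
          ((TensorProduct.map (LinearMap.id : A →ₗ[K] A) ε) (δ a)) = a)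
    (hbimod : ∀ a x b : A,
      δ (a * x * b) =
        (TensorProduct.map (LinearMap.mulLeft K a) (LinearMap.mulRight K b)) (δ x))
    {M : Type*} [AddCommGroup M] [Module K M] (co : M →ₗ[K] M ⊗[K] A)
    (hco_coassoc : ∀ x : M,
      (TensorProduct.assoc K M A A)
          ((TensorProduct.map co (LinearMap.id : A →ₗ[K] A)) (co x)) =
        (TensorProduct.map (LinearMap.id : M →ₗ[K] M) δ) (co x))
    (hco_counit : ∀ x : M,
      (TensorProduct.rid K M)
          ((TensorProduct.map (LinearMap.id : M →ₗ[K] M) ε) (co x)) = x) :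
    (∀ (x : M) (a b : A),
      modOf ε co (modOf ε co (x ⊗ₜ[K] a) ⊗ₜ[K] b) = modOf ε co (x ⊗ₜ[K] (a * b))) ∧
    (∀ x : M, modOf ε co (x ⊗ₜ[K] (1 : A)) = x) := by
  -- δ(c * a) = (id ⊗ (· * a)) (δ c)
  have hδmul : ∀ c a : A,
      δ (c * a) = TensorProduct.map LinearMap.id (LinearMap.mulRight K a) (δ c) := by
    intro c a
    have := hbimod 1 c a
    simpa [LinearMap.mulLeft_one] using this
  -- scalar identity:  pmap ε b a (δ c) = ε (c * a * b)
  have hscal : ∀ a b c : A, pmap ε b a (δ c) = ε (c * a * b) := by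
    intro a b c
    have h1 : TensorProduct.rid K A
        (TensorProduct.map LinearMap.id ε
          (TensorProduct.map LinearMap.id (LinearMap.mulRight K a) (δ c))) = c * a := by
      rw [← hδmul]; exact hcounit_r (c * a)
    have h2 : ∀ t : A ⊗[K] A,
        gmap ε b (TensorProduct.rid K A
          (TensorProduct.map LinearMap.id ε
            (TensorProduct.map LinearMap.id (LinearMap.mulRight K a) t))) = pmap ε b a t := by
      intro t
      induction t using TensorProduct.induction_on with
      | zero => simp
      | tmul u v => simp [mul_comm]
      | add s t hs ht => simp only [map_add, hs, ht]
    have := h2 (δ c)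
    rw [h1] at this
    simpa using this.symm
  constructor
  · intro x a b
    -- abbreviations
    set F : M →ₗ[K] M :=
      (TensorProduct.rid K M).toLinearMap ∘ₗ
        TensorProduct.map LinearMap.id (gmap ε b) ∘ₗ co with hF
    set T : M ⊗[K] (A ⊗[K] A) →ₗ[K] M :=
      (TensorProduct.rid K M).toLinearMap ∘ₗ
        TensorProduct.map LinearMap.id (pmap ε b a) with hT
    have hmod_b : ∀ y : M, modOf ε co (y ⊗ₜ[K] b) = F y := by
      intro y; rw [modOf_tmul]; rfl
    -- inner: T (assoc (s ⊗ c)) = ε(c*a) • rid ((id ⊗ g b) s)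
    have hinner : ∀ (c : A) (s : M ⊗[K] A),
        T (TensorProduct.assoc K M A A (s ⊗ₜ[K] c)) =
          ε (c * a) • TensorProduct.rid K M
            (TensorProduct.map LinearMap.id (gmap ε b) s) := by
      intro c s
      induction s using TensorProduct.induction_on with
      | zero => simp
      | tmul z u =>
        simp [hT, smul_smul, mul_comm]
      | add s t hs ht =>
        simp only [add_tmul, map_add, hs, ht, smul_add]
    -- claim 1: LHS = T (assoc ((co ⊗ id) (co x)))
    have hclaim1 : ∀ t : M ⊗[K] A,
        F (TensorProduct.rid K M (TensorProduct.map LinearMap.id (gmap ε a) t)) =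
          T (TensorProduct.assoc K M A A
              (TensorProduct.map co LinearMap.id t)) := by
      intro t
      induction t using TensorProduct.induction_on with
      | zero => simp
      | tmul y c =>
        simp only [TensorProduct.map_tmul, LinearMap.id_coe, id_eq, gmap_apply,
          TensorProduct.rid_tmul, map_smul, hinner c (co y)]
        simp [hF]
      | add s t hs ht => simp only [map_add, hs, ht]
    -- claim 3: T ((id ⊗ δ) t) = rid ((id ⊗ g (a*b)) t)
    have hclaim3 : ∀ t : M ⊗[K] A,
        T (TensorProduct.map LinearMap.id δ t) =
          TensorProduct.rid K M
            (TensorProduct.map LinearMap.id (gmap ε (a * b)) t) := by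
      intro t
      induction t using TensorProduct.induction_on with
      | zero => simp
      | tmul y c =>
        have : pmap ε b a (δ c) = ε (c * (a * b)) := by
          rw [hscal a b c, mul_assoc]
        simp only [TensorProduct.map_tmul, LinearMap.id_coe, id_eq, gmap_apply, hT]
        generalize hδc : δ c = s at this
        induction s using TensorProduct.induction_on with
        | zero => simp [← this]
        | tmul u v => simp [← this]
        | add s t hs ht =>
          simp only [map_add, LinearMap.coe_comp, Function.comp_apply,
            LinearEquiv.coe_toLinearMap, tmul_add] at *
          rw [← this]
          simp [tmul_add]
      | add s t hs ht => simp only [map_add, hs, ht]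
    calc modOf ε co (modOf ε co (x ⊗ₜ[K] a) ⊗ₜ[K] b)
        = F (TensorProduct.rid K M
            (TensorProduct.map LinearMap.id (gmap ε a) (co x))) := by
          rw [hmod_b, modOf_tmul]
      _ = T (TensorProduct.assoc K M A A
            (TensorProduct.map co LinearMap.id (co x))) := hclaim1 (co x)
      _ = T (TensorProduct.map LinearMap.id δ (co x)) := by rw [hco_coassoc x]
      _ = TensorProduct.rid K M
            (TensorProduct.map LinearMap.id (gmap ε (a * b)) (co x)) :=
          hclaim3 (co x)
      _ = modOf ε co (x ⊗ₜ[K] (a * b)) := (modOf_tmul ε co x (a * b)).symm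
  · intro x
    rw [modOf_tmul]
    have : gmap ε (1 : A) = ε := by
      ext c; simp
    rw [this]
    exact hco_counit x
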